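/- There exists a formal context and an itemset X such that every proper subset Y ⊂ X satisfies |Y'| − |X'| ≥ Δ (with Δ = 2), but X is not a Δ-key. Concretely: take G = {g₁, g₂, g₃}, M = {m₁, m₂}, with g₁ having no attributes, g₂ having {m₁}, g₃ having {m₁, m₂}; then X = {m₂} satisfies the condition for Δ = 2 but is not a 2-key. -/
import Mathlib


def extentOf {G M : Type*} (I : G → M → Prop) (B : Set M) : Set G :=
  {g | ∀ m ∈ B, I g m}

def DeltaClosed {G M : Type*} (I : G → M → Prop) (Δ : ℕ) (B : Set M) : Prop :=
  ∀ m ∉ B, (extentOf I B).ncard - (extentOf I (insert m B)).ncard ≥ Δ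

/-- The incidence of the concrete counterexample context: `g₁` has no
attributes, `g₂` has `{m₁}`, `g₃` has `{m₁, m₂}`. -/
def ctxI : Fin 3 → Fin 2 → Prop := fun g m => (g = 1 ∧ m = 0) ∨ g = 2

lemma ext_empty : extentOf ctxI (∅ : Set (Fin 2)) = Set.univ := by
  ext g; simp [extentOf]

lemma ext_one : extentOf ctxI ({1} : Set (Fin 2)) = {2} := by
  ext g; simp [extentOf, ctxI]

lemma ext_zero : extentOf ctxI ({0} : Set (Fin 2)) = {1, 2} := by
  ext g; simp [extentOf, ctxI]

lemma ext_both : extentOf ctxI ({1, 0} : Set (Fin 2)) = {2} := by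
  ext g; simp [extentOf, ctxI]; tauto

lemma closed_univ (B : Set (Fin 2)) (hB : DeltaClosed ctxI 2 B) : B = Set.univ := by
  have h0 : (0 : Fin 2) ∈ B := by
    by_contra h0
    have h := hB 0 h0
    have hsub : extentOf ctxI B ⊆ extentOf ctxI (insert 0 B) ∪ {0} := by
      intro g hg
      by_cases hg0 : g = 0
      · right; simp [hg0]
      · left
        intro m hm
        rcases hm with rfl | hm
        · fin_cases g <;> simp_all [ctxI]
        · exact hg m hm
    have h1 := Set.ncard_le_ncard hsub (Set.toFinite _)
    have h2 := Set.ncard_union_le (extentOf ctxI (insert 0 B)) ({0} : Set (Fin 3))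
    rw [Set.ncard_singleton] at h2
    omega
  have h1 : (1 : Fin 2) ∈ B := by
    by_contra h1
    have hBeq : B = {0} := by
      ext m; fin_cases m <;> simp_all
    have h := hB 1 h1
    rw [hBeq, ext_zero, show insert (1:Fin 2) {0} = ({1,0} : Set (Fin 2)) from rfl,
      ext_both] at h
    rw [Set.ncard_pair (by decide), Set.ncard_singleton] at h
    omega
  ext m; fin_cases m <;> simp [h0, h1]

/-- The converse of the necessary condition for Δ-keys fails: in the
concrete context above, `X = {m₂}` satisfies `|Y'| − |X'| ≥ 2` for every
proper subset `Y ⊂ X`, yet `X` is not a 2-key: it is not minimal in its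
2-equivalence class under any 2-closure operator `φ`. -/
theorem not_every_delta_free_is_delta_key :
    (∀ Y ⊂ ({1} : Set (Fin 2)),
        (extentOf ctxI Y).ncard - (extentOf ctxI ({1} : Set (Fin 2))).ncard ≥ 2) ∧
    (∀ φ : Set (Fin 2) → Set (Fin 2),
      (∀ B, B ⊆ φ B) →
      (∀ B, DeltaClosed ctxI 2 (φ B)) →
      (∀ B C, B ⊆ C → DeltaClosed ctxI 2 C → φ B ⊆ C) →
      ∃ Y ⊂ ({1} : Set (Fin 2)), φ Y = φ ({1} : Set (Fin 2))) := by
  constructor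
  · intro Y hY
    have hYe : Y = ∅ := Set.ssubset_singleton_iff.mp hY
    rw [hYe, ext_empty, ext_one, Set.ncard_univ, Set.ncard_singleton]
    simp
  · intro φ _ hclosed _
    refine ⟨∅, Set.empty_ssubset.mpr (Set.singleton_nonempty 1), ?_⟩
    rw [closed_univ _ (hclosed ∅), closed_univ _ (hclosed {1})]
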